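/- Let (Ω, P) be a probability space, d ≥ 2, let E be an exponential random variable with rate 1, and let T = (T_1,…,T_d) be an R^d-valued random vector independent of E. Define Z_j = E + T_j - max_i T_i, let F_j(z) = P(Z_j ≤ z), let F_j^{-1}(q) = inf{z ∈ R : F_j(z) ≥ q}, and let q* = inf{q ∈ (0,1) : F_j^{-1}(q) > 0 for all j = 1,…,d}. Set V_j = exp(T_j - max_i T_i) / E[exp(T_j - max_i T_i)]. Then for every q ∈ (q*, 1), P(Z_j > F_j^{-1}(q) for some j ∈ {1,…,d}) / (1 - q) = E[max_j V_j]; in particular ω_{1:d} = lim_{q→1⁻} P(Z_j > F_j^{-1}(q) for some j)/(1-q) exists and equals E[max_j V_j]. -/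
import Mathlib


open MeasureTheory ProbabilityTheory

/-- The (right-continuous) distribution function of a real random variable `Z` under `P`. -/
noncomputable def distFun {Ω : Type*} [MeasurableSpace Ω]
    (P : Measure Ω) (Z : Ω → ℝ) (z : ℝ) : ℝ :=
  (P {ω | Z ω ≤ z}).toReal

/-- The generalized inverse (quantile function) `F⁻¹(q) = inf {z : F(z) ≥ q}`. -/
noncomputable def quantileFun {Ω : Type*} [MeasurableSpace Ω]
    (P : Measure Ω) (Z : Ω → ℝ) (q : ℝ) : ℝ :=
  sInf {z : ℝ | q ≤ distFun P Z z}

section helpers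

lemma sup'_const_mul {ι : Type*} (s : Finset ι) (H : s.Nonempty) (f : ι → ℝ) {c : ℝ}
    (hc : 0 ≤ c) : s.sup' H (fun i => c * f i) = c * s.sup' H f := by
  apply le_antisymm
  · exact Finset.sup'_le _ _ fun i hi => mul_le_mul_of_nonneg_left (Finset.le_sup' f hi) hc
  · obtain ⟨i, hi, hEq⟩ := Finset.exists_mem_eq_sup' H f
    rw [hEq]
    exact Finset.le_sup' (fun i => c * f i) hi

lemma exp_sup' {ι : Type*} (s : Finset ι) (H : s.Nonempty) (f : ι → ℝ) :
    Real.exp (s.sup' H f) = s.sup' H (fun i => Real.exp (f i)) := by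
  apply le_antisymm
  · obtain ⟨i, hi, hEq⟩ := Finset.exists_mem_eq_sup' H f
    rw [hEq]
    exact Finset.le_sup' (fun i => Real.exp (f i)) hi
  · exact Finset.sup'_le _ _ fun i hi => Real.exp_le_exp.mpr (Finset.le_sup' f hi)

lemma measurable_pi_sup' {d : ℕ} (H : (Finset.univ : Finset (Fin d)).Nonempty) :
    Measurable (fun t : Fin d → ℝ => Finset.univ.sup' H t) := by
  have h : (fun t : Fin d → ℝ => Finset.univ.sup' H t)
      = Finset.univ.sup' H (fun i (t : Fin d → ℝ) => t i) := by
    funext t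
    rw [Finset.sup'_apply]
  rw [h]
  exact Finset.measurable_sup' H fun n _ => measurable_pi_apply n

lemma monotone_distFun {Ω : Type*} [MeasurableSpace Ω] (P : Measure Ω)
    [IsProbabilityMeasure P] (Zj : Ω → ℝ) : Monotone (distFun P Zj) := by
  intro a b hab
  exact ENNReal.toReal_mono (measure_ne_top _ _)
    (measure_mono fun ω hω => le_trans hω hab)

lemma keyA {Ω : Type*} [MeasurableSpace Ω] (P : Measure Ω) [IsProbabilityMeasure P]
    {d : ℕ} (E : Ω → ℝ) (T : Ω → Fin d → ℝ) (hE : Measurable E) (hT : Measurable T)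
    (hExp : ∀ x : ℝ, 0 ≤ x → P {ω | x < E ω} = ENNReal.ofReal (Real.exp (-x)))
    (hIndep : IndepFun E T P)
    (g : (Fin d → ℝ) → ℝ) (hg : Measurable g) (hg0 : ∀ t, 0 ≤ g t) :
    (P {ω | g (T ω) < E ω}).toReal = ∫ ω, Real.exp (-g (T ω)) ∂P := by
  have hmapE : IsProbabilityMeasure (P.map E) := Measure.isProbabilityMeasure_map hE.aemeasurable
  have hTE : P.map (fun ω => (T ω, E ω)) = (P.map T).prod (P.map E) :=
    (indepFun_iff_map_prod_eq_prod_map_map hT.aemeasurable hE.aemeasurable).mp hIndep.symm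
  have hs : MeasurableSet {p : (Fin d → ℝ) × ℝ | g p.1 < p.2} :=
    measurableSet_lt (hg.comp measurable_fst) measurable_snd
  have hIoi : ∀ x : ℝ, 0 ≤ x → (P.map E) (Set.Ioi x) = ENNReal.ofReal (Real.exp (-x)) := by
    intro x hx
    rw [Measure.map_apply hE measurableSet_Ioi]
    exact hExp x hx
  have h1 : P {ω | g (T ω) < E ω} = ∫⁻ ω, ENNReal.ofReal (Real.exp (-g (T ω))) ∂P := by
    have h2 : P {ω | g (T ω) < E ω}
        = P.map (fun ω => (T ω, E ω)) {p : (Fin d → ℝ) × ℝ | g p.1 < p.2} := by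
      rw [Measure.map_apply (hT.prodMk hE) hs]
      rfl
    rw [h2, hTE, Measure.prod_apply hs]
    have h3 : ∀ t : Fin d → ℝ,
        (P.map E) (Prod.mk t ⁻¹' {p : (Fin d → ℝ) × ℝ | g p.1 < p.2})
          = ENNReal.ofReal (Real.exp (-g t)) := by
      intro t
      have : Prod.mk t ⁻¹' {p : (Fin d → ℝ) × ℝ | g p.1 < p.2} = Set.Ioi (g t) := rfl
      rw [this, hIoi (g t) (hg0 t)]
    rw [lintegral_congr h3]
    exact lintegral_map (by measurability) hT
  have hm : Measurable fun ω => Real.exp (-g (T ω)) :=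
    Real.measurable_exp.comp ((hg.comp hT).neg)
  rw [h1]
  exact (integral_eq_lintegral_of_nonneg_ae
    (Filter.Eventually.of_forall fun ω => (Real.exp_pos _).le)
    hm.aestronglyMeasurable).symm

lemma quantile_eq {Ω : Type*} [MeasurableSpace Ω] (P : Measure Ω) [IsProbabilityMeasure P]
    (Zj : Ω → ℝ) {c : ℝ} (hc : 0 < c)
    (hF : ∀ z : ℝ, 0 ≤ z → distFun P Zj z = 1 - Real.exp (-z) * c)
    {q : ℝ} (hq1 : q < 1) (hqc : 1 - c < q) :
    quantileFun P Zj q = Real.log (c / (1 - q)) := by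
  have h1q : 0 < 1 - q := by linarith
  have hdiv : 0 < c / (1 - q) := div_pos hc h1q
  set u := Real.log (c / (1 - q)) with hu
  have hupos : 0 < u := Real.log_pos ((one_lt_div h1q).mpr (by linarith))
  have hFu : distFun P Zj u = q := by
    rw [hF u hupos.le, Real.exp_neg, Real.exp_log hdiv]
    rw [inv_div, div_mul_cancel₀ _ (ne_of_gt hc)]
    ring
  have hlb : ∀ z ∈ {z : ℝ | q ≤ distFun P Zj z}, u ≤ z := by
    intro z hz
    by_contra hzu
    push_neg at hzu
    rcases le_or_gt 0 z with hz0 | hz0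
    · have : distFun P Zj z < q := by
        rw [hF z hz0]
        have : Real.exp (-u) < Real.exp (-z) := Real.exp_lt_exp.mpr (by linarith)
        have h2 : 1 - Real.exp (-z) * c < 1 - Real.exp (-u) * c := by nlinarith
        rw [← hFu, hF u hupos.le] at *
        linarith
      exact absurd hz (by simp only [Set.mem_setOf_eq]; linarith)
    · have h0 : distFun P Zj z ≤ distFun P Zj 0 := monotone_distFun P Zj hz0.le
      have : distFun P Zj 0 = 1 - c := by rw [hF 0 le_rfl]; simp
      have : distFun P Zj z ≤ 1 - c := by linarith
      exact absurd hz (by simp only [Set.mem_setOf_eq]; linarith)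
  have hmem : u ∈ {z : ℝ | q ≤ distFun P Zj z} := by
    simp only [Set.mem_setOf_eq, hFu, le_refl]
  exact le_antisymm (csInf_le ⟨u, hlb⟩ hmem) (le_csInf ⟨u, hmem⟩ hlb)

lemma quantile_nonpos {Ω : Type*} [MeasurableSpace Ω] (P : Measure Ω)
    (Zj : Ω → ℝ) {q : ℝ} (h0 : q ≤ distFun P Zj 0) :
    quantileFun P Zj q ≤ 0 := by
  have hmem : (0 : ℝ) ∈ {z : ℝ | q ≤ distFun P Zj z} := h0
  by_cases hb : BddBelow {z : ℝ | q ≤ distFun P Zj z}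
  · exact csInf_le hb hmem
  · unfold quantileFun
    rw [csInf_of_not_bddBelow hb, Real.sInf_empty]

end helpers

theorem union_aux
    {Ω : Type*} [MeasurableSpace Ω] (P : Measure Ω) [IsProbabilityMeasure P]
    (d : ℕ) (E : Ω → ℝ) (T : Ω → Fin d → ℝ) (hE : Measurable E) (hT : Measurable T)
    (hExp : ∀ x : ℝ, 0 ≤ x → P {ω | x < E ω} = ENNReal.ofReal (Real.exp (-x)))
    (hIndep : IndepFun E T P)
    (H : (Finset.univ : Finset (Fin d)).Nonempty)
    (Z : Fin d → Ω → ℝ)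
    (hZ : Z = fun j ω => E ω + T ω j - Finset.univ.sup' H (T ω))
    (V : Fin d → Ω → ℝ)
    (hV : V = fun j ω => Real.exp (T ω j - Finset.univ.sup' H (T ω)) /
        ∫ ω', Real.exp (T ω' j - Finset.univ.sup' H (T ω')) ∂P)
    (qstar : ℝ)
    (hqstar : qstar = sInf {q : ℝ | q ∈ Set.Ioo (0:ℝ) 1 ∧ ∀ j, 0 < quantileFun P (Z j) q}) :
    (∀ q ∈ Set.Ioo qstar 1,
      (P {ω | ∃ j, quantileFun P (Z j) q < Z j ω}).toReal / (1 - q)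
        = ∫ ω, Finset.univ.sup' H (fun j => V j ω) ∂P) ∧
    Filter.Tendsto (fun q => (P {ω | ∃ j, quantileFun P (Z j) q < Z j ω}).toReal / (1 - q))
      (nhdsWithin 1 (Set.Iio 1))
      (nhds (∫ ω, Finset.univ.sup' H (fun j => V j ω) ∂P)) := by
  classical
  obtain ⟨c, hc⟩ : ∃ c : Fin d → ℝ,
      ∀ j, c j = ∫ ω', Real.exp (T ω' j - Finset.univ.sup' H (T ω')) ∂P :=
    ⟨_, fun j => rfl⟩
  have hVj : ∀ j ω, V j ω = Real.exp (T ω j - Finset.univ.sup' H (T ω)) / c j := by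
    intro j ω
    rw [hV, hc j]
  have hMf : Measurable (fun t : Fin d → ℝ => Finset.univ.sup' H t) := measurable_pi_sup' H
  have hM : Measurable (fun ω => Finset.univ.sup' H (T ω)) := hMf.comp hT
  have hTj : ∀ j, Measurable (fun ω => T ω j) := fun j => (measurable_pi_apply j).comp hT
  have hWle : ∀ j ω, T ω j - Finset.univ.sup' H (T ω) ≤ 0 :=
    fun j ω => sub_nonpos.mpr (Finset.le_sup' (T ω) (Finset.mem_univ j))
  have hWm : ∀ j, Measurable (fun ω => Real.exp (T ω j - Finset.univ.sup' H (T ω))) :=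
    fun j => Real.measurable_exp.comp ((hTj j).sub hM)
  have hint : ∀ j, Integrable (fun ω => Real.exp (T ω j - Finset.univ.sup' H (T ω))) P := by
    intro j
    refine Integrable.mono' (integrable_const 1) (hWm j).aestronglyMeasurable ?_
    refine Filter.Eventually.of_forall fun ω => ?_
    rw [Real.norm_eq_abs, abs_of_pos (Real.exp_pos _)]
    exact Real.exp_le_one_iff.mpr (hWle j ω)
  have hcpos : ∀ j, 0 < c j := by
    intro j
    rw [hc j]
    refine (integral_pos_iff_support_of_nonneg (fun ω => (Real.exp_pos _).le) (hint j)).mpr ?_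
    have hsupp : Function.support (fun ω => Real.exp (T ω j - Finset.univ.sup' H (T ω)))
        = Set.univ := by
      ext ω; simp [Function.mem_support, Real.exp_ne_zero]
    rw [hsupp]
    simp
  have hcle : ∀ j, c j ≤ 1 := by
    intro j
    rw [hc j]
    have h2 := integral_mono (hint j) (integrable_const (1:ℝ))
      (fun ω => Real.exp_le_one_iff.mpr (hWle j ω))
    simpa using h2
  -- distribution function formula
  have hF : ∀ (j : Fin d) (z : ℝ), 0 ≤ z → distFun P (Z j) z = 1 - Real.exp (-z) * c j := by
    intro j z hz
    have hgm : Measurable (fun t : Fin d → ℝ => z - (t j - Finset.univ.sup' H t)) :=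
      measurable_const.sub ((measurable_pi_apply j).sub hMf)
    have hg0 : ∀ t : Fin d → ℝ, 0 ≤ z - (t j - Finset.univ.sup' H t) := by
      intro t
      have h3 : t j ≤ Finset.univ.sup' H t := Finset.le_sup' t (Finset.mem_univ j)
      linarith
    have hset : {ω | z < Z j ω}
        = {ω | (fun t : Fin d → ℝ => z - (t j - Finset.univ.sup' H t)) (T ω) < E ω} := by
      ext ω
      simp only [Set.mem_setOf_eq, hZ]
      constructor <;> intro h <;> linarith
    have hPgt : (P {ω | z < Z j ω}).toReal = Real.exp (-z) * c j := by
      rw [hset, keyA P E T hE hT hExp hIndep _ hgm hg0]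
      have h4 : ∀ ω, Real.exp (-(z - (T ω j - Finset.univ.sup' H (T ω))))
          = Real.exp (-z) * Real.exp (T ω j - Finset.univ.sup' H (T ω)) := by
        intro ω
        rw [← Real.exp_add]
        ring_nf
      simp only [h4]
      rw [integral_const_mul, hc j]
    have hmeasZ : Measurable (Z j) := by
      rw [hZ]
      exact (hE.add (hTj j)).sub hM
    have hcompl : {ω | Z j ω ≤ z} = {ω | z < Z j ω}ᶜ := by
      ext ω
      simp only [Set.mem_compl_iff, Set.mem_setOf_eq, not_lt]
    rw [distFun, hcompl, prob_compl_eq_one_sub (measurableSet_lt measurable_const hmeasZ),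
      ENNReal.toReal_sub_of_le prob_le_one ENNReal.one_ne_top, ENNReal.toReal_one, hPgt]
  have hQ : ∀ (j : Fin d) (q : ℝ), q < 1 → 1 - c j < q →
      quantileFun P (Z j) q = Real.log (c j / (1 - q)) :=
    fun j q h1 h2 => quantile_eq P (Z j) (hcpos j) (hF j) h1 h2
  -- the set S defining qstar
  have hSub : ∀ q ∈ {q : ℝ | q ∈ Set.Ioo (0:ℝ) 1 ∧ ∀ j, 0 < quantileFun P (Z j) q},
      ∀ j, 1 - c j < q := by
    intro q hq j
    by_contra hle
    push_neg at hle
    have h0 : q ≤ distFun P (Z j) 0 := by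
      rw [hF j 0 le_rfl]
      simp only [neg_zero, Real.exp_zero, one_mul]
      linarith
    exact absurd (hq.2 j) (not_lt.mpr (quantile_nonpos P (Z j) h0))
  have hm1 : Finset.univ.sup' H (fun j => 1 - c j) < 1 :=
    (Finset.sup'_lt_iff H).mpr fun j _ => by linarith [hcpos j]
  have hm0 : 0 ≤ Finset.univ.sup' H (fun j => 1 - c j) := by
    obtain ⟨j0, hj0⟩ := H
    exact le_trans (by linarith [hcle j0]) (Finset.le_sup' (fun j => 1 - c j) hj0)
  set m := Finset.univ.sup' H (fun j => 1 - c j) with hm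
  set q0 : ℝ := (m + 1) / 2 with hq0
  have hq0m : m < q0 := by rw [hq0]; linarith
  have hq01 : q0 < 1 := by rw [hq0]; linarith
  have hq0S : q0 ∈ {q : ℝ | q ∈ Set.Ioo (0:ℝ) 1 ∧ ∀ j, 0 < quantileFun P (Z j) q} := by
    refine ⟨⟨by rw [hq0]; linarith, hq01⟩, fun j => ?_⟩
    have hj : 1 - c j ≤ m := Finset.le_sup' (fun j => 1 - c j) (Finset.mem_univ j)
    rw [hQ j q0 hq01 (by linarith)]
    exact Real.log_pos ((one_lt_div (by linarith)).mpr (by linarith))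
  have hqstar1 : qstar < 1 := by
    rw [hqstar]
    exact lt_of_le_of_lt (csInf_le ⟨0, fun q hq => (hq.1.1).le⟩ hq0S) hq01
  have hqstarge : ∀ j, 1 - c j ≤ qstar := by
    intro j
    rw [hqstar]
    exact le_csInf ⟨q0, hq0S⟩ fun q hq => (hSub q hq j).le
  -- main computation
  have hmain : ∀ q ∈ Set.Ioo qstar 1,
      (P {ω | ∃ j, quantileFun P (Z j) q < Z j ω}).toReal / (1 - q)
        = ∫ ω, Finset.univ.sup' H (fun j => V j ω) ∂P := by
    intro q hq
    obtain ⟨hql, hqu⟩ := hq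
    have h1q : 0 < 1 - q := by linarith
    set u : Fin d → ℝ := fun j => Real.log (c j / (1 - q)) with hu
    have hcq : ∀ j, 1 - q < c j := fun j => by linarith [hqstarge j]
    have hquant : ∀ j, quantileFun P (Z j) q = u j :=
      fun j => hQ j q hqu (by linarith [hqstarge j])
    have hupos : ∀ j, 0 < u j :=
      fun j => Real.log_pos ((one_lt_div h1q).mpr (hcq j))
    set g : (Fin d → ℝ) → ℝ :=
      fun t => -(Finset.univ.sup' H (fun j => (t j - Finset.univ.sup' H t) - u j)) with hg
    have hgm : Measurable g := by
      apply Measurable.neg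
      have h5 : (fun t : Fin d → ℝ =>
          Finset.univ.sup' H (fun j => (t j - Finset.univ.sup' H t) - u j))
          = Finset.univ.sup' H (fun j (t : Fin d → ℝ) => (t j - Finset.univ.sup' H t) - u j) := by
        funext t
        rw [Finset.sup'_apply]
      rw [h5]
      exact Finset.measurable_sup' H fun j _ =>
        ((measurable_pi_apply j).sub (measurable_pi_sup' H)).sub measurable_const
    have hg0 : ∀ t, 0 ≤ g t := by
      intro t
      rw [hg]
      simp only [neg_nonneg]
      refine Finset.sup'_le H _ fun j _ => ?_
      have h3 : t j ≤ Finset.univ.sup' H t := Finset.le_sup' t (Finset.mem_univ j)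
      linarith [hupos j]
    have hset : {ω | ∃ j, quantileFun P (Z j) q < Z j ω} = {ω | g (T ω) < E ω} := by
      ext ω
      simp only [Set.mem_setOf_eq, hquant]
      simp only [hZ, hg]
      rw [neg_lt, Finset.lt_sup'_iff]
      constructor
      · rintro ⟨j, hj⟩
        exact ⟨j, Finset.mem_univ j, by linarith⟩
      · rintro ⟨j, _, hj⟩
        exact ⟨j, by linarith⟩
    rw [hset, keyA P E T hE hT hExp hIndep g hgm hg0]
    have hpt : ∀ ω, Real.exp (-g (T ω)) = (1 - q) * Finset.univ.sup' H (fun j => V j ω) := by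
      intro ω
      rw [hg]
      simp only [neg_neg]
      rw [exp_sup', ← sup'_const_mul Finset.univ H (fun j => V j ω) h1q.le]
      refine Finset.sup'_congr H rfl fun j _ => ?_
      rw [hVj j ω, Real.exp_sub,
        show Real.exp (u j) = c j / (1 - q) from Real.exp_log (div_pos (hcpos j) h1q),
        div_div_eq_mul_div, mul_comm, mul_div_assoc]
    simp only [hpt]
    rw [integral_const_mul, mul_div_cancel_left₀ _ (ne_of_gt h1q)]
  refine ⟨hmain, ?_⟩
  refine Filter.Tendsto.congr' ?_ tendsto_const_nhds
  filter_upwards [Ioo_mem_nhdsLT_of_mem (Set.mem_Ioc.mpr ⟨hqstar1, le_refl 1⟩)] with q hq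
  exact (hmain q hq).symm


theorem union_exceedance_coefficient_omega
    {Ω : Type*} [MeasurableSpace Ω] (P : Measure Ω) [IsProbabilityMeasure P]
    (d : ℕ) (hd : 2 ≤ d)
    (E : Ω → ℝ) (T : Ω → Fin d → ℝ) (hE : Measurable E) (hT : Measurable T)
    (hExp : ∀ x : ℝ, 0 ≤ x → P {ω | x < E ω} = ENNReal.ofReal (Real.exp (-x)))
    (hIndep : IndepFun E T P)
    (Z : Fin d → Ω → ℝ)
    (hZ : Z = fun j ω => E ω + T ω j -
      Finset.univ.sup' ⟨⟨0, by omega⟩, Finset.mem_univ _⟩ (T ω))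
    (V : Fin d → Ω → ℝ)
    (hV : V = fun j ω =>
      Real.exp (T ω j - Finset.univ.sup' ⟨⟨0, by omega⟩, Finset.mem_univ _⟩ (T ω)) /
        ∫ ω', Real.exp (T ω' j -
          Finset.univ.sup' ⟨⟨0, by omega⟩, Finset.mem_univ _⟩ (T ω')) ∂P)
    (qstar : ℝ)
    (hqstar : qstar = sInf {q : ℝ | q ∈ Set.Ioo (0 : ℝ) 1 ∧
      ∀ j, 0 < quantileFun P (Z j) q}) :
    (∀ q ∈ Set.Ioo qstar 1,
      (P {ω | ∃ j, quantileFun P (Z j) q < Z j ω}).toReal / (1 - q)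
        = ∫ ω, Finset.univ.sup' ⟨⟨0, by omega⟩, Finset.mem_univ _⟩ (fun j => V j ω) ∂P) ∧
    Filter.Tendsto
      (fun q => (P {ω | ∃ j, quantileFun P (Z j) q < Z j ω}).toReal / (1 - q))
      (nhdsWithin 1 (Set.Iio 1))
      (nhds (∫ ω, Finset.univ.sup' ⟨⟨0, by omega⟩, Finset.mem_univ _⟩ (fun j => V j ω) ∂P)) := by
  exact union_aux P d E T hE hT hExp hIndep ⟨⟨0, by omega⟩, Finset.mem_univ _⟩
    Z hZ V hV qstar hqstar
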